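/- arXiv:1910.12139 — 4 statements merged into one kernel-verified Lean document; each statement's English description precedes it below -/
import Mathlib

section
/- Let G be a finite simple graph on n vertices with eigenvalues λ_1 ≥ λ_2 ≥ … ≥ λ_n of its adjacency matrix, where λ_1 is the largest eigenvalue. Then EE(G) ≥ e^{λ_1} + (n − 1) − λ_1, with equality if and only if G has no edges (G is the empty graph on n vertices). -/
open Finset Real

namespace EstradaIndexPaper

/-- The adjacency matrix of a simple graph over `ℝ` is Hermitian. -/
theorem adjMatrix_isHermitian {n : ℕ} (G : SimpleGraph (Fin n)) [DecidableRel G.Adj] :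
    (G.adjMatrix ℝ).IsHermitian := by
  unfold Matrix.IsHermitian
  rw [Matrix.conjTranspose_eq_transpose_of_trivial]
  exact G.isSymm_adjMatrix

/-- The eigenvalues of the adjacency matrix of `G`. -/
noncomputable def eig {n : ℕ} (G : SimpleGraph (Fin n)) [DecidableRel G.Adj] : Fin n → ℝ :=
  (adjMatrix_isHermitian G).eigenvalues

/-- The Estrada index of `G`: the sum of `e^{λ_i}` over the adjacency eigenvalues. -/
noncomputable def EE {n : ℕ} (G : SimpleGraph (Fin n)) [DecidableRel G.Adj] : ℝ :=
  ∑ i, Real.exp (eig G i)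

/-- The largest adjacency eigenvalue `λ₁` of `G`. -/
noncomputable def lam1 {n : ℕ} (G : SimpleGraph (Fin n)) [DecidableRel G.Adj] : ℝ :=
  ⨆ i, eig G i

/-- The Randić index `R(G) = Σ_{ij ∈ E(G)} (d(i)d(j))^{-1/2}`. -/
noncomputable def randic {n : ℕ} (G : SimpleGraph (Fin n)) [DecidableRel G.Adj] : ℝ :=
  ∑ e ∈ G.edgeFinset,
    Sym2.lift ⟨fun i j => (Real.sqrt ((G.degree i : ℝ) * (G.degree j : ℝ)))⁻¹,
      fun i j => by simp [mul_comm]⟩ e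

/-- The general Randić index `R_{1/2}(G) = Σ_{ij ∈ E(G)} (d(i)d(j))^{1/2}`. -/
noncomputable def randicHalf {n : ℕ} (G : SimpleGraph (Fin n)) [DecidableRel G.Adj] : ℝ :=
  ∑ e ∈ G.edgeFinset,
    Sym2.lift ⟨fun i j => Real.sqrt ((G.degree i : ℝ) * (G.degree j : ℝ)),
      fun i j => by simp [mul_comm]⟩ e


lemma sum_eig_trace {n : ℕ} {A : Matrix (Fin n) (Fin n) ℝ} (hA : A.IsHermitian) :
    ∑ i, hA.eigenvalues i = A.trace := by
  conv_rhs => rw [hA.spectral_theorem]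
  rw [Unitary.conjStarAlgAut_apply, Matrix.trace_mul_cycle,
    (Matrix.mem_unitaryGroup_iff').mp (hA.eigenvectorUnitary).2, Matrix.one_mul,
    Matrix.trace_diagonal]
  simp

lemma sum_eig_zero {n : ℕ} (G : SimpleGraph (Fin n)) [DecidableRel G.Adj] :
    ∑ i, eig G i = 0 := by
  rw [eig, sum_eig_trace, SimpleGraph.trace_adjMatrix]

lemma eig_zero_of_adj_zero {n : ℕ} (G : SimpleGraph (Fin n)) [DecidableRel G.Adj]
    (h : G.adjMatrix ℝ = 0) (i : Fin n) : eig G i = 0 := by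
  have key : ∀ x : Fin n → ℝ, (G.adjMatrix ℝ).mulVec x = 0 := fun x => by
    rw [h, Matrix.zero_mulVec]
  have hm := (adjMatrix_isHermitian G).mulVec_eigenvectorBasis i
  rw [key] at hm
  have hv := (adjMatrix_isHermitian G).eigenvectorBasis.orthonormal.ne_zero i
  rcases smul_eq_zero.mp hm.symm with h1 | h1
  · unfold eig
    exact h1
  · exact absurd ((WithLp.ofLp_eq_zero 2).mp h1) hv

lemma adj_zero_of_eig_zero {n : ℕ} (G : SimpleGraph (Fin n)) [DecidableRel G.Adj]
    (h : ∀ i, eig G i = 0) : G.adjMatrix ℝ = 0 := by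
  have h' : ∀ i, (adjMatrix_isHermitian G).eigenvalues i = 0 := h
  rw [(adjMatrix_isHermitian G).spectral_theorem]
  have hd : Matrix.diagonal (RCLike.ofReal ∘ (adjMatrix_isHermitian G).eigenvalues)
      = (0 : Matrix (Fin n) (Fin n) ℝ) := by
    ext i j
    by_cases hij : i = j <;> simp [Matrix.diagonal, hij, h' j]
  rw [hd]
  simp

lemma bot_iff_adj_zero {n : ℕ} (G : SimpleGraph (Fin n)) [DecidableRel G.Adj] :
    G = ⊥ ↔ G.adjMatrix ℝ = 0 := by
  constructor
  · intro h
    subst h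
    ext i j
    simp [SimpleGraph.adjMatrix_apply]
  · intro h
    ext i j
    simp only [SimpleGraph.bot_adj, iff_false]
    intro hadj
    have := congrFun (congrFun h i) j
    simp [SimpleGraph.adjMatrix_apply, hadj] at this

theorem stmt0 {n : ℕ} (G : SimpleGraph (Fin n)) [DecidableRel G.Adj] :
    EE G ≥ Real.exp (lam1 G) + ((n : ℝ) - 1) - lam1 G ∧
    (EE G = Real.exp (lam1 G) + ((n : ℝ) - 1) - lam1 G ↔ G = ⊥) := by
  rcases Nat.eq_zero_or_pos n with h0 | hn
  · subst h0
    have hE : EE G = 0 := by simp [EE]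
    have hl : lam1 G = 0 := by rw [lam1, iSup_of_empty']; exact Real.sSup_empty
    have hb : G = ⊥ := by
      ext i j
      exact i.elim0
    rw [hE, hl]
    norm_num [hb]
  · haveI : Nonempty (Fin n) := Fin.pos_iff_nonempty.mp hn
    obtain ⟨i0, hi0⟩ := Finite.exists_max (eig G)
    have hlam : lam1 G = eig G i0 :=
      le_antisymm (ciSup_le hi0) (le_ciSup (Set.Finite.bddAbove (Set.finite_range _)) i0)
    have hsum := sum_eig_zero G
    have hcard : ((univ.erase i0).card : ℝ) = (n : ℝ) - 1 := by
      rw [Finset.card_erase_of_mem (mem_univ i0), card_univ, Fintype.card_fin,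
        Nat.cast_sub hn]
      norm_num
    have h1 : ∑ i ∈ univ.erase i0, eig G i = - eig G i0 := by
      have := Finset.sum_erase_add univ (eig G) (mem_univ i0)
      linarith
    have hEE : ∑ i ∈ univ.erase i0, Real.exp (eig G i) = EE G - Real.exp (eig G i0) := by
      have := Finset.sum_erase_add univ (fun i => Real.exp (eig G i)) (mem_univ i0)
      rw [EE]; linarith
    have key : EE G - (Real.exp (lam1 G) + ((n : ℝ) - 1) - lam1 G)
        = ∑ i ∈ univ.erase i0, (Real.exp (eig G i) - (eig G i + 1)) := by
      rw [Finset.sum_sub_distrib, Finset.sum_add_distrib, Finset.sum_const, nsmul_eq_mul,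
        mul_one, hEE, h1, hcard, hlam]
      ring
    have hterm : ∀ i ∈ univ.erase i0, 0 ≤ Real.exp (eig G i) - (eig G i + 1) := by
      intro i _
      have := Real.add_one_le_exp (eig G i)
      linarith
    have hnn : 0 ≤ ∑ i ∈ univ.erase i0, (Real.exp (eig G i) - (eig G i + 1)) :=
      Finset.sum_nonneg hterm
    constructor
    · linarith [key]
    constructor
    · intro heq
      have hz : ∑ i ∈ univ.erase i0, (Real.exp (eig G i) - (eig G i + 1)) = 0 := by
        linarith [key]
      have hall := (Finset.sum_eq_zero_iff_of_nonneg hterm).mp hz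
      have heig : ∀ i, eig G i = 0 := by
        have hne : ∀ i ∈ univ.erase i0, eig G i = 0 := by
          intro i hi
          by_contra hx
          have := Real.add_one_lt_exp hx
          have := hall i hi
          linarith
        intro i
        by_cases hii : i = i0
        · subst hii
          have : ∑ i ∈ univ.erase i, eig G i = 0 := Finset.sum_eq_zero hne
          rw [h1] at this
          linarith
        · exact hne i (Finset.mem_erase.mpr ⟨hii, mem_univ i⟩)
      exact (bot_iff_adj_zero G).mpr (adj_zero_of_eig_zero G heig)
    · intro hb
      have heig : ∀ i, eig G i = 0 :=
        eig_zero_of_adj_zero G ((bot_iff_adj_zero G).mp hb)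
      have hz : ∑ i ∈ univ.erase i0, (Real.exp (eig G i) - (eig G i + 1)) = 0 :=
        Finset.sum_eq_zero (fun i _ => by simp [heig i])
      linarith [key]

end EstradaIndexPaper
end

section
/- Let G be a connected finite simple graph on n ≥ 2 vertices with m edges and Randić index R = R(G). Then EE(G) > e^{m/R} + (n − 1) − m/R. -/
open Finset Real

namespace EstradaIndexPaper

open Matrix

section Aux

variable {n : ℕ} (G : SimpleGraph (Fin n)) [DecidableRel G.Adj]

lemma exists_rep (e : Sym2 (Fin n)) (he : e ∈ G.edgeFinset) :
    ∃ a b, G.Adj a b ∧ e = s(a, b) := by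
  revert he
  refine Sym2.ind (fun a b he => ?_) e
  exact ⟨a, b, by simpa using he, rfl⟩

lemma sum_adj_eq_two_mul (F : {f : Fin n → Fin n → ℝ // ∀ a b, f a b = f b a}) :
    ∑ i, ∑ j, (G.adjMatrix ℝ) i j * F.1 i j
      = 2 * ∑ e ∈ G.edgeFinset, Sym2.lift F e := by
  classical
  have h1 : ∑ i, ∑ j, (G.adjMatrix ℝ) i j * F.1 i j
      = ∑ p ∈ (univ ×ˢ univ).filter (fun p : Fin n × Fin n => G.Adj p.1 p.2),
          F.1 p.1 p.2 := by
    rw [Finset.sum_filter, ← Finset.sum_product']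
    refine Finset.sum_congr rfl fun p _ => ?_
    by_cases h : G.Adj p.1 p.2 <;> simp [h]
  have hmaps : ∀ p ∈ (univ ×ˢ univ).filter (fun p : Fin n × Fin n => G.Adj p.1 p.2),
      s(p.1, p.2) ∈ G.edgeFinset := by
    intro p hp
    simp only [Finset.mem_filter] at hp
    simpa using hp.2
  rw [h1, ← Finset.sum_fiberwise_of_maps_to hmaps, Finset.mul_sum]
  refine Finset.sum_congr rfl fun e he => ?_
  obtain ⟨a, b, hab, rfl⟩ := exists_rep G e he
  have hfiber : ((univ ×ˢ univ).filter (fun p : Fin n × Fin n => G.Adj p.1 p.2)).filter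
      (fun p => s(p.1, p.2) = s(a, b)) = {(a, b), (b, a)} := by
    ext p
    obtain ⟨p1, p2⟩ := p
    simp only [Finset.mem_filter, Finset.mem_product, Finset.mem_univ, true_and,
      Sym2.eq_iff, Finset.mem_insert, Finset.mem_singleton, Prod.mk.injEq]
    constructor
    · rintro ⟨_, (⟨rfl, rfl⟩ | ⟨rfl, rfl⟩)⟩
      · exact Or.inl ⟨rfl, rfl⟩
      · exact Or.inr ⟨rfl, rfl⟩
    · rintro (⟨rfl, rfl⟩ | ⟨rfl, rfl⟩)
      · exact ⟨hab, Or.inl ⟨rfl, rfl⟩⟩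
      · exact ⟨hab.symm, Or.inr ⟨rfl, rfl⟩⟩
  rw [hfiber, Finset.sum_pair (by simp [Prod.ext_iff, hab.ne, hab.ne'])]
  simp only [Sym2.lift_mk]
  rw [F.2 b a]
  ring

lemma rayleigh {A : Matrix (Fin n) (Fin n) ℝ} (hA : A.IsHermitian) [Nonempty (Fin n)]
    (v : Fin n → ℝ) :
    dotProduct v (A *ᵥ v) ≤ (⨆ i, hA.eigenvalues i) * dotProduct v v := by
  classical
  set U : Matrix (Fin n) (Fin n) ℝ := (hA.eigenvectorUnitary : Matrix (Fin n) (Fin n) ℝ) with hU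
  set c : Fin n → ℝ := v ᵥ* U with hc
  have hstar : star U = Uᵀ := by
    rw [Matrix.star_eq_conjTranspose, Matrix.conjTranspose_eq_transpose_of_trivial]
  have hcs : (star U) *ᵥ v = c := by rw [hstar, Matrix.mulVec_transpose]
  have h1 : A *ᵥ v = U *ᵥ ((Matrix.diagonal (RCLike.ofReal ∘ hA.eigenvalues)) *ᵥ c) := by
    conv_lhs => rw [hA.spectral_theorem, Unitary.conjStarAlgAut_apply]
    rw [← Matrix.mulVec_mulVec, ← Matrix.mulVec_mulVec, hcs]
  have hdot : ∀ x : Fin n → ℝ, dotProduct v (U *ᵥ x) = dotProduct c x := by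
    intro x
    rw [dotProduct_mulVec, hc]
  have h2 : dotProduct v (A *ᵥ v) = ∑ i, hA.eigenvalues i * (c i * c i) := by
    rw [h1, hdot, dotProduct]
    refine Finset.sum_congr rfl fun i _ => ?_
    rw [Matrix.mulVec_diagonal]
    simp [RCLike.ofReal]
    ring
  have h3 : dotProduct v v = ∑ i, c i * c i := by
    have hv : v = U *ᵥ c := by
      rw [← hcs, Matrix.mulVec_mulVec]
      rw [show U * star U = 1 from Unitary.coe_mul_star_self hA.eigenvectorUnitary,
        Matrix.one_mulVec]
    nth_rewrite 2 [hv]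
    rw [hdot]
    rfl
  rw [h2, h3, Finset.mul_sum]
  refine Finset.sum_le_sum fun i _ => ?_
  exact mul_le_mul_of_nonneg_right
    (le_ciSup (Set.Finite.bddAbove (Set.finite_range _)) i) (mul_self_nonneg _)

lemma trace_eig {A : Matrix (Fin n) (Fin n) ℝ} (hA : A.IsHermitian) :
    ∑ i, hA.eigenvalues i = Matrix.trace A := by
  classical
  conv_rhs => rw [hA.spectral_theorem, Unitary.conjStarAlgAut_apply]
  rw [Matrix.trace_mul_cycle]
  rw [show (star (hA.eigenvectorUnitary : Matrix (Fin n) (Fin n) ℝ)) *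
      (hA.eigenvectorUnitary : Matrix (Fin n) (Fin n) ℝ) = 1 from
      Unitary.coe_star_mul_self hA.eigenvectorUnitary]
  rw [Matrix.one_mul, Matrix.trace_diagonal]
  simp [RCLike.ofReal]

lemma eig_all_zero {A : Matrix (Fin n) (Fin n) ℝ} (hA : A.IsHermitian)
    (h : ∀ i, hA.eigenvalues i = 0) : A = 0 := by
  classical
  have hd : Matrix.diagonal (RCLike.ofReal ∘ hA.eigenvalues) = (0 : Matrix (Fin n) (Fin n) ℝ) := by
    ext i j
    rcases eq_or_ne i j with rfl | hij
    · simp [Matrix.diagonal, h i, RCLike.ofReal]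
    · simp [Matrix.diagonal_apply_ne _ hij]
  rw [hA.spectral_theorem, hd]
  simp

end Aux

theorem stmt1 {n : ℕ} (hn : 2 ≤ n) (G : SimpleGraph (Fin n)) [DecidableRel G.Adj]
    (hG : G.Connected) (m R : ℝ) (hm : m = G.edgeFinset.card) (hR : R = randic G) :
    EE G > Real.exp (m / R) + ((n : ℝ) - 1) - m / R := by
  classical
  haveI : Nonempty (Fin n) := ⟨⟨0, by omega⟩⟩
  haveI : Nontrivial (Fin n) :=
    ⟨⟨⟨0, by omega⟩, ⟨1, by omega⟩, Fin.ne_of_val_ne (by norm_num)⟩⟩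
  have hA := adjMatrix_isHermitian G
  have hGbot : G ≠ ⊥ := by
    intro h
    rw [h] at hG
    exact SimpleGraph.not_connected_bot hG
  have hne : G.edgeFinset.Nonempty := SimpleGraph.edgeFinset_nonempty.mpr hGbot
  have hm0 : (0 : ℝ) < m := by
    rw [hm]
    exact_mod_cast hne.card_pos
  let F : {f : Fin n → Fin n → ℝ // ∀ a b, f a b = f b a} :=
    ⟨fun i j => Real.sqrt ((G.degree i : ℝ) * (G.degree j : ℝ)),
      fun i j => by simp [mul_comm]⟩
  have hF1 : ∀ i j, F.1 i j = Real.sqrt ((G.degree i : ℝ) * (G.degree j : ℝ)) :=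
    fun i j => rfl
  have hwpos : ∀ e ∈ G.edgeFinset, 0 < Sym2.lift F e := by
    intro e he
    obtain ⟨a, b, hab, rfl⟩ := exists_rep G e he
    rw [Sym2.lift_mk, hF1]
    have hda : 0 < G.degree a := by
      rw [G.degree_pos_iff_exists_adj]
      exact ⟨b, hab⟩
    have hdb : 0 < G.degree b := by
      rw [G.degree_pos_iff_exists_adj]
      exact ⟨a, hab.symm⟩
    have : (0:ℝ) < (G.degree a : ℝ) * (G.degree b : ℝ) := by positivity
    exact Real.sqrt_pos.mpr this
  have hRh : randicHalf G = ∑ e ∈ G.edgeFinset, Sym2.lift F e := rfl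
  have hRsum : R = ∑ e ∈ G.edgeFinset, (Sym2.lift F e)⁻¹ := by
    rw [hR, randic]
    refine Finset.sum_congr rfl fun e _ => ?_
    induction e using Sym2.ind with
    | _ a b => simp [Sym2.lift_mk, hF1]
  have hR0 : 0 < R := by
    rw [hRsum]
    exact Finset.sum_pos (fun e he => inv_pos.mpr (hwpos e he)) hne
  have hCS : m ^ 2 ≤ randicHalf G * R := by
    rw [hRh, hRsum, hm]
    have hcard : ((G.edgeFinset.card : ℝ)) = ∑ _e ∈ G.edgeFinset, (1 : ℝ) := by simp
    rw [hcard]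
    refine Finset.sum_sq_le_sum_mul_sum_of_sq_eq_mul G.edgeFinset
      (fun e he => (hwpos e he).le) (fun e he => (inv_pos.mpr (hwpos e he)).le)
      (fun e he => ?_)
    rw [mul_inv_cancel₀ (hwpos e he).ne']
    norm_num
  -- Rayleigh quotient with v i = sqrt (deg i)
  have hAv : dotProduct (fun i => Real.sqrt (G.degree i))
      ((G.adjMatrix ℝ) *ᵥ (fun i => Real.sqrt (G.degree i))) = 2 * randicHalf G := by
    rw [hRh, ← sum_adj_eq_two_mul G F]
    simp only [dotProduct, Matrix.mulVec, Finset.mul_sum]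
    refine Finset.sum_congr rfl fun i _ => Finset.sum_congr rfl fun j _ => ?_
    rw [hF1, Real.sqrt_mul (Nat.cast_nonneg _)]
    ring
  have hvv : dotProduct (fun i => Real.sqrt (G.degree i))
      (fun i => Real.sqrt (G.degree i)) = 2 * m := by
    rw [hm, dotProduct]
    rw [Finset.sum_congr rfl fun i _ => Real.mul_self_sqrt (Nat.cast_nonneg _)]
    rw [← Nat.cast_sum _ _, SimpleGraph.sum_degrees_eq_twice_card_edges]
    push_cast
    ring
  have hray := rayleigh hA (fun i => Real.sqrt (G.degree i))
  rw [hAv, hvv] at hray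
  have hsup : (⨆ i, hA.eigenvalues i) = lam1 G := rfl
  rw [hsup] at hray
  have hRhm : randicHalf G ≤ lam1 G * m := by linarith
  have hlam : m / R ≤ lam1 G := by
    rw [div_le_iff₀ hR0]
    nlinarith [mul_le_mul_of_nonneg_right hRhm hR0.le]
  have hmR0 : 0 ≤ m / R := (div_pos hm0 hR0).le
  -- spectral decomposition of EE
  obtain ⟨i0, hi0⟩ : ∃ i, eig G i = lam1 G := exists_eq_ciSup_of_finite
  have htr : ∑ i, eig G i = 0 := by
    rw [show ∑ i, eig G i = Matrix.trace (G.adjMatrix ℝ) from trace_eig hA]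
    simp [Matrix.trace, Matrix.diag]
  have hAne : G.adjMatrix ℝ ≠ 0 := by
    obtain ⟨e, he⟩ := hne
    obtain ⟨a, b, hab, rfl⟩ := exists_rep G e he
    intro h0
    have h1 := congrFun (congrFun h0 a) b
    simp [hab] at h1
  have hex : ∃ j ∈ univ.erase i0, eig G j ≠ 0 := by
    have hexk : ∃ k, eig G k ≠ 0 := by
      by_contra h
      push_neg at h
      exact hAne (eig_all_zero hA h)
    obtain ⟨k, hk⟩ := hexk
    rcases eq_or_ne k i0 with rfl | hki
    · have hse : ∑ j ∈ univ.erase k, eig G j = - eig G k := by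
        rw [Finset.sum_erase_eq_sub (Finset.mem_univ k), htr]
        ring
      have hnz : ∑ j ∈ univ.erase k, eig G j ≠ 0 := by
        rw [hse]
        simpa using hk
      obtain ⟨j, hj, hjne⟩ := Finset.exists_ne_zero_of_sum_ne_zero hnz
      exact ⟨j, hj, hjne⟩
    · exact ⟨k, Finset.mem_erase.mpr ⟨hki, Finset.mem_univ k⟩, hk⟩
  have hEE : EE G = Real.exp (lam1 G) + ∑ j ∈ univ.erase i0, Real.exp (eig G j) := by
    rw [EE, ← Finset.add_sum_erase _ _ (Finset.mem_univ i0), hi0]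
  have hcard' : (((univ : Finset (Fin n)).erase i0).card : ℝ) = (n : ℝ) - 1 := by
    have h1 : ((univ : Finset (Fin n)).erase i0).card = n - 1 := by
      rw [Finset.card_erase_of_mem (Finset.mem_univ _)]
      simp
    rw [h1, Nat.cast_sub (by omega)]
    simp
  have hsum2 : ∑ j ∈ univ.erase i0, (eig G j + 1) = ((n:ℝ) - 1) - lam1 G := by
    rw [Finset.sum_add_distrib, Finset.sum_const, nsmul_eq_mul,
      Finset.sum_erase_eq_sub (Finset.mem_univ i0), htr, hi0, hcard']
    ring
  have hlt : ((n:ℝ) - 1) - lam1 G < ∑ j ∈ univ.erase i0, Real.exp (eig G j) := by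
    rw [← hsum2]
    obtain ⟨j, hj, hjne⟩ := hex
    exact Finset.sum_lt_sum (fun k _ => Real.add_one_le_exp _)
      ⟨j, hj, Real.add_one_lt_exp hjne⟩
  have hmono : Real.exp (m / R) + (lam1 G - m / R) ≤ Real.exp (lam1 G) := by
    have hd : 0 ≤ lam1 G - m / R := by linarith
    have h1 : (lam1 G - m / R) + 1 ≤ Real.exp (lam1 G - m / R) := Real.add_one_le_exp _
    have h2 : 1 ≤ Real.exp (m / R) := Real.one_le_exp hmR0
    have h3 : Real.exp (m / R) * Real.exp (lam1 G - m / R) = Real.exp (lam1 G) := by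
      rw [← Real.exp_add]
      exact congrArg Real.exp (by ring)
    nlinarith [Real.exp_pos (m / R)]
  rw [hEE]
  linarith

end EstradaIndexPaper
end

section
/- Let G be a finite simple graph on n vertices with m ≥ 1 edges, and let R_{1/2}(G) = Σ_{ij ∈ E(G)} (d(i)d(j))^{1/2} be its general Randić index with exponent 1/2. Then EE(G) > e^{R_{1/2}/m} + (n − 1) − R_{1/2}/m. -/
open Finset Real

namespace EstradaIndexPaper

/-- Sums over darts are twice sums over edges. -/
lemma sum_darts_eq {V : Type*} [Fintype V] [DecidableEq V] (G : SimpleGraph V)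
    [DecidableRel G.Adj] (f : Sym2 V → ℝ) :
    ∑ d : G.Dart, f d.edge = 2 * ∑ e ∈ G.edgeFinset, f e := by
  rw [← Finset.sum_fiberwise_of_maps_to (s := univ) (t := G.edgeFinset)
    (g := SimpleGraph.Dart.edge) (f := fun d => f d.edge)
    (fun d _ => SimpleGraph.mem_edgeFinset.mpr d.edge_mem), Finset.mul_sum]
  refine Finset.sum_congr rfl fun e he => ?_
  rw [Finset.sum_congr rfl (fun d hd => by rw [(Finset.mem_filter.mp hd).2]),
    Finset.sum_const]
  have : #(Finset.univ.filter fun d : G.Dart => d.edge = e) = 2 := by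
    simpa using G.dart_edge_fiber_card e (SimpleGraph.mem_edgeFinset.mp he)
  rw [this]; simp [mul_comm]

/-- Sums over darts as double sums over adjacent vertex pairs. -/
lemma sum_darts_eq_double {V : Type*} [Fintype V] [DecidableEq V] (G : SimpleGraph V)
    [DecidableRel G.Adj] (g : V → V → ℝ) :
    ∑ d : G.Dart, g d.fst d.snd = ∑ v, ∑ u, if G.Adj v u then g v u else 0 := by
  let e : (Σ v : V, G.neighborSet v) ≃ G.Dart :=
    { toFun := fun s => ⟨(s.fst, s.snd), s.snd.property⟩
      invFun := fun d => ⟨d.fst, d.snd, d.adj⟩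
      left_inv := fun s => by ext <;> simp
      right_inv := fun d => by ext <;> simp }
  rw [← Fintype.sum_equiv e (fun s => g s.fst s.snd) (fun d => g d.fst d.snd) (fun s => rfl),
    ← Finset.univ_sigma_univ, Finset.sum_sigma]
  refine Finset.sum_congr rfl fun v _ => ?_
  rw [Finset.sum_set_coe (f := fun u => g v u), ← SimpleGraph.neighborFinset_def,
    SimpleGraph.neighborFinset_eq_filter, Finset.sum_filter]

open Matrix in
/-- Rayleigh bound: the quadratic form is at most the max eigenvalue times the norm². -/
lemma rayleigh_le {N : ℕ} (A : Matrix (Fin N) (Fin N) ℝ) (hA : A.IsHermitian) (c : ℝ)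
    (hc : ∀ i, hA.eigenvalues i ≤ c) (x : Fin N → ℝ) :
    dotProduct x (A.mulVec x) ≤ c * dotProduct x x := by
  set U : Matrix (Fin N) (Fin N) ℝ := (hA.eigenvectorUnitary : Matrix (Fin N) (Fin N) ℝ) with hU
  set y : Fin N → ℝ := star U *ᵥ x with hy
  have hUU : U * star U = 1 := Matrix.mem_unitaryGroup_iff.mp hA.eigenvectorUnitary.2
  have hUy : U *ᵥ y = x := by
    rw [hy, Matrix.mulVec_mulVec, hUU, Matrix.one_mulVec]
  have hxU : Matrix.vecMul x U = y := by
    rw [hy, Matrix.star_eq_conjTranspose, Matrix.conjTranspose_eq_transpose_of_trivial,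
      ← Matrix.vecMul_transpose, Matrix.transpose_transpose]
  have h1 : dotProduct x (A.mulVec x) = ∑ i, hA.eigenvalues i * (y i)^2 := by
    conv_lhs => rw [hA.spectral_theorem, Unitary.conjStarAlgAut_apply]
    rw [← Matrix.mulVec_mulVec, ← Matrix.mulVec_mulVec, dotProduct_mulVec, hxU, ← hy]
    simp only [dotProduct, Matrix.mulVec_diagonal, Function.comp_apply,
      RCLike.ofReal_real_eq_id, id_eq]
    exact Finset.sum_congr rfl fun i _ => by ring
  have h2 : dotProduct x x = ∑ i, (y i)^2 := by
    have hx2 : dotProduct x x = dotProduct x (U *ᵥ y) := by rw [hUy]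
    rw [hx2, dotProduct_mulVec, hxU]
    simp [dotProduct, pow_two]
  rw [h1, h2, Finset.mul_sum]
  exact Finset.sum_le_sum fun i _ => mul_le_mul_of_nonneg_right (hc i) (sq_nonneg _)

lemma exp_sub_mono {a b : ℝ} (hb : 0 ≤ b) (hba : b ≤ a) :
    Real.exp b - b ≤ Real.exp a - a := by
  have h1 : 1 + (a - b) ≤ Real.exp (a - b) := by linarith [Real.add_one_le_exp (a - b)]
  have h2 : (1 : ℝ) ≤ Real.exp b := by
    rw [Real.one_le_exp_iff]; exact hb
  have h3 : Real.exp a = Real.exp b * Real.exp (a - b) := by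
    rw [← Real.exp_add]; ring_nf
  nlinarith [Real.exp_pos b]

theorem stmt3 {n : ℕ} (G : SimpleGraph (Fin n)) [DecidableRel G.Adj]
    (hm : 1 ≤ G.edgeFinset.card) :
    EE G > Real.exp (randicHalf G / (G.edgeFinset.card : ℝ)) + ((n : ℝ) - 1) -
      randicHalf G / (G.edgeFinset.card : ℝ) := by
  classical
  set m : ℝ := (G.edgeFinset.card : ℝ) with hmdef
  have hm0 : (0 : ℝ) < m := by
    have : (1 : ℝ) ≤ m := Nat.one_le_cast.mpr hm
    linarith
  set R : ℝ := randicHalf G with hRdef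
  set t : ℝ := R / m with htdef
  -- R ≥ 0 hence t ≥ 0
  have hR0 : 0 ≤ R := by
    refine Finset.sum_nonneg fun e _ => ?_
    induction e using Sym2.ind with
    | _ i j => rw [Sym2.lift_mk]; exact Real.sqrt_nonneg _
  have ht0 : 0 ≤ t := div_nonneg hR0 hm0.le
  -- there is an edge, hence a vertex
  obtain ⟨e₀, he₀⟩ := Finset.card_pos.mp (lt_of_lt_of_le one_pos hm)
  have hA := adjMatrix_isHermitian G
  -- sum of eigenvalues is zero
  have htr : ∑ i, eig G i = 0 := by
    have : ∑ i, hA.eigenvalues i = (G.adjMatrix ℝ).trace := by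
      conv_rhs => rw [hA.spectral_theorem]
      rw [Unitary.conjStarAlgAut_apply, Matrix.trace_mul_cycle, Unitary.coe_star_mul_self, one_mul, Matrix.trace_diagonal]
      simp
    simpa [eig, SimpleGraph.trace_adjMatrix] using this
  -- adjacency matrix is nonzero
  have hAne : G.adjMatrix ℝ ≠ 0 := by
    have he' := SimpleGraph.mem_edgeFinset.mp he₀
    induction e₀ using Sym2.ind with
    | _ i j =>
      intro h0
      have : (G.adjMatrix ℝ) i j = 0 := by rw [h0]; rfl
      rw [SimpleGraph.adjMatrix_apply] at this
      rw [SimpleGraph.mem_edgeSet] at he'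
      simp [he'] at this
  -- some eigenvalue is nonzero
  have hex : ∃ j, eig G j ≠ 0 := by
    by_contra hcon
    push_neg at hcon
    apply hAne
    have hst := hA.spectral_theorem
    have hz : (RCLike.ofReal ∘ hA.eigenvalues : Fin n → ℝ) = 0 := by
      funext i
      simp [show hA.eigenvalues i = 0 from hcon i]
    have hd0 : Matrix.diagonal (0 : Fin n → ℝ) = 0 := Matrix.diagonal_zero
    rw [Unitary.conjStarAlgAut_apply, hz, hd0, mul_zero, zero_mul] at hst
    exact hst
  -- some eigenvalue is negative
  have hneg : ∃ j, eig G j < 0 := by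
    by_contra hcon
    push_neg at hcon
    obtain ⟨j, hj⟩ := hex
    exact hj ((Finset.sum_eq_zero_iff_of_nonneg (fun i _ => hcon i)).mp htr j (mem_univ j))
  obtain ⟨j, hj⟩ := hneg
  -- the maximal eigenvalue
  obtain ⟨i₀, -, hmax⟩ := Finset.exists_max_image (univ : Finset (Fin n)) (eig G)
    ⟨j, mem_univ j⟩
  have hmax' : ∀ i, eig G i ≤ eig G i₀ := fun i => hmax i (mem_univ i)
  -- Rayleigh with x = sqrt ∘ degree
  set x : Fin n → ℝ := fun v => Real.sqrt (G.degree v) with hxdef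
  have hxAx : dotProduct x ((G.adjMatrix ℝ).mulVec x) = 2 * R := by
    have h1 : dotProduct x ((G.adjMatrix ℝ).mulVec x)
        = ∑ v, ∑ u, if G.Adj v u then
            Real.sqrt ((G.degree v : ℝ) * (G.degree u : ℝ)) else 0 := by
      simp only [dotProduct, Matrix.mulVec, SimpleGraph.adjMatrix_apply,
        Finset.mul_sum]
      refine Finset.sum_congr rfl fun v _ => Finset.sum_congr rfl fun u _ => ?_
      by_cases h : G.Adj v u
      · simp only [h, if_true, one_mul]
        exact (Real.sqrt_mul (by positivity : (0:ℝ) ≤ (G.degree v : ℝ)) _).symm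
      · simp [h]
    rw [h1, ← sum_darts_eq_double G
      (fun v u => Real.sqrt ((G.degree v : ℝ) * (G.degree u : ℝ)))]
    have h2 : ∀ d : G.Dart,
        Real.sqrt ((G.degree d.fst : ℝ) * (G.degree d.snd : ℝ))
          = Sym2.lift ⟨fun i j => Real.sqrt ((G.degree i : ℝ) * (G.degree j : ℝ)),
              fun i j => by simp [mul_comm]⟩ d.edge := fun d => rfl
    rw [Finset.sum_congr rfl fun d _ => h2 d, sum_darts_eq]
    rfl
  have hxx : dotProduct x x = 2 * m := by
    have : dotProduct x x = ∑ v, (G.degree v : ℝ) := by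
      refine Finset.sum_congr rfl fun v _ => ?_
      simp [hxdef, Real.mul_self_sqrt (by positivity : (0:ℝ) ≤ (G.degree v : ℝ))]
    rw [this, hmdef]
    rw [← Nat.cast_sum, SimpleGraph.sum_degrees_eq_twice_card_edges]
    push_cast
    ring
  have hray := rayleigh_le (G.adjMatrix ℝ) hA (eig G i₀) hmax' x
  rw [hxAx, hxx] at hray
  have hti₀ : t ≤ eig G i₀ := by
    rw [htdef, div_le_iff₀ hm0]
    nlinarith
  have hji₀ : j ≠ i₀ := by
    intro h
    rw [h] at hj
    linarith
  -- main estimate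
  have hsplit : EE G = Real.exp (eig G i₀) + ∑ i ∈ univ.erase i₀, Real.exp (eig G i) := by
    rw [EE, ← Finset.add_sum_erase _ _ (mem_univ i₀)]
  have hstrict : ∑ i ∈ univ.erase i₀, (1 + eig G i)
      < ∑ i ∈ univ.erase i₀, Real.exp (eig G i) := by
    refine Finset.sum_lt_sum (fun i _ => by linarith [Real.add_one_le_exp (eig G i)])
      ⟨j, Finset.mem_erase.mpr ⟨hji₀, mem_univ j⟩, by
        linarith [Real.add_one_lt_exp (ne_of_lt hj)]⟩
  have hsum_erase : ∑ i ∈ univ.erase i₀, (1 + eig G i) = ((n : ℝ) - 1) - eig G i₀ := by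
    rw [Finset.sum_add_distrib, Finset.sum_const, Finset.card_erase_of_mem (mem_univ i₀)]
    have hn1 : 1 ≤ n := Nat.pos_of_ne_zero (fun h => by subst h; exact i₀.elim0)
    have h1 : ∑ i ∈ univ.erase i₀, eig G i = - eig G i₀ := by
      have := Finset.add_sum_erase univ (eig G) (mem_univ i₀)
      rw [htr] at this
      linarith
    rw [h1]
    simp only [Finset.card_univ, Fintype.card_fin, nsmul_eq_mul, mul_one]
    rw [Nat.cast_sub hn1]
    push_cast
    ring
  have hmono : Real.exp t - t ≤ Real.exp (eig G i₀) - eig G i₀ :=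
    exp_sub_mono ht0 hti₀
  calc Real.exp t + ((n : ℝ) - 1) - t
      ≤ Real.exp (eig G i₀) + ((n : ℝ) - 1) - eig G i₀ := by linarith
    _ < EE G := by rw [hsplit]; linarith
end EstradaIndexPaper
end

section
/- Let G be a connected unicyclic bipartite finite simple graph on n vertices (i.e., G is connected and bipartite with exactly n edges). Then EE(G) ≥ 2cosh(2) + (n − 2), with equality if and only if G is the cycle C_4 on 4 vertices. -/
open Finset Real

namespace EstradaIndexPaper

/-! ### Auxiliary lemmas -/

theorem trace_pow_eq {n : ℕ} (G : SimpleGraph (Fin n)) [DecidableRel G.Adj] (k : ℕ) :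
    Matrix.trace ((G.adjMatrix ℝ) ^ k) = ∑ i, (eig G i) ^ k := by
  set hA := adjMatrix_isHermitian G with hhA
  set V : Matrix (Fin n) (Fin n) ℝ := (hA.eigenvectorUnitary : Matrix (Fin n) (Fin n) ℝ) with hV
  have hmem := hA.eigenvectorUnitary.2
  have h1 : V * star V = 1 := (Matrix.mem_unitaryGroup_iff).mp hmem
  have h2 : star V * V = 1 := (Matrix.mem_unitaryGroup_iff').mp hmem
  set D : Matrix (Fin n) (Fin n) ℝ := Matrix.diagonal (RCLike.ofReal ∘ hA.eigenvalues) with hD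
  have hspec : G.adjMatrix ℝ = V * D * star V := hA.spectral_theorem
  have hpow : (G.adjMatrix ℝ) ^ k = V * D ^ k * star V := by
    induction k with
    | zero => simp [h1]
    | succ m ih =>
        rw [pow_succ, ih, hspec, pow_succ]
        simp only [Matrix.mul_assoc]
        rw [← Matrix.mul_assoc (star V) V, h2, Matrix.one_mul]
  rw [hpow, Matrix.trace_mul_cycle, h2, Matrix.one_mul]
  have : D ^ k = Matrix.diagonal (fun i => (hA.eigenvalues i) ^ k) := by
    rw [hD, Matrix.diagonal_pow]
    simp [RCLike.ofReal_real_eq_id]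
  rw [this, Matrix.trace_diagonal]
  rfl

theorem trace_odd_pow {n : ℕ} (G : SimpleGraph (Fin n)) [DecidableRel G.Adj]
    (hbip : G.Colorable 2) (k : ℕ) (hk : Odd k) :
    Matrix.trace ((G.adjMatrix ℝ) ^ k) = 0 := by
  obtain ⟨C⟩ := hbip
  set s : Fin n → ℝ := fun i => if C i = 0 then 1 else -1 with hs
  set D : Matrix (Fin n) (Fin n) ℝ := Matrix.diagonal s with hD
  have hD2 : D * D = 1 := by
    rw [hD, Matrix.diagonal_mul_diagonal]
    have : (fun i => s i * s i) = fun _ => (1:ℝ) :=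
      funext fun i => by by_cases h : C i = 0 <;> simp [hs, h]
    rw [this, Matrix.diagonal_one]
  have fin2 : ∀ x : Fin 2, x ≠ 0 → x = 1 := by decide
  have hDAD : D * (G.adjMatrix ℝ) * D = -(G.adjMatrix ℝ) := by
    ext i j
    rw [Matrix.mul_diagonal, Matrix.diagonal_mul]
    by_cases hadj : G.Adj i j
    · have hne : C i ≠ C j := C.valid hadj
      have hss : s i * s j = -1 := by
        have e1 : ∀ v, C v = 0 → s v = 1 := fun v hv => by simp [hs, hv]
        have e2 : ∀ v, C v ≠ 0 → s v = -1 := fun v hv => by simp [hs, hv]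
        by_cases h : C i = 0 <;> by_cases h' : C j = 0
        · exact absurd (h.trans h'.symm) hne
        · rw [e1 i h, e2 j h']; ring
        · rw [e2 i h, e1 j h']; ring
        · exact absurd ((fin2 _ h).trans (fin2 _ h').symm) hne
      rw [SimpleGraph.adjMatrix_apply, if_pos hadj, Matrix.neg_apply,
        SimpleGraph.adjMatrix_apply, if_pos hadj]
      calc s i * 1 * s j = s i * s j := by ring
      _ = -1 := hss
    · simp [SimpleGraph.adjMatrix_apply, hadj]
  have hconj : ∀ m : ℕ, (D * (G.adjMatrix ℝ) * D) ^ m = D * (G.adjMatrix ℝ) ^ m * D := by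
    intro m
    induction m with
    | zero => simp [hD2]
    | succ p ih =>
        rw [pow_succ, ih, pow_succ]
        calc D * SimpleGraph.adjMatrix ℝ G ^ p * D * (D * SimpleGraph.adjMatrix ℝ G * D)
            = D * SimpleGraph.adjMatrix ℝ G ^ p * (D * D) * SimpleGraph.adjMatrix ℝ G * D := by
              simp only [Matrix.mul_assoc]
          _ = D * (SimpleGraph.adjMatrix ℝ G ^ p * SimpleGraph.adjMatrix ℝ G) * D := by
              rw [hD2]; simp only [Matrix.mul_assoc, Matrix.mul_one, Matrix.one_mul]
  have h1 : Matrix.trace ((G.adjMatrix ℝ) ^ k) = Matrix.trace ((D * (G.adjMatrix ℝ) * D) ^ k) := by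
    rw [hconj, Matrix.trace_mul_cycle, hD2, Matrix.one_mul]
  rw [hDAD] at h1
  rw [hk.neg_pow, Matrix.trace_neg] at h1
  linarith

theorem trace_sq {n : ℕ} (G : SimpleGraph (Fin n)) [DecidableRel G.Adj] :
    Matrix.trace ((G.adjMatrix ℝ) ^ 2) = 2 * (G.edgeFinset.card : ℝ) := by
  rw [pow_two, Matrix.trace]
  have : ∀ i, ((G.adjMatrix ℝ) * (G.adjMatrix ℝ)).diag i = (G.degree i : ℝ) := by
    intro i
    exact G.adjMatrix_mul_self_apply_self i
  rw [Finset.sum_congr rfl fun i _ => this i]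
  rw [← Nat.cast_sum, SimpleGraph.sum_degrees_eq_twice_card_edges]
  push_cast
  ring

theorem trace_pow4_ge {n : ℕ} (G : SimpleGraph (Fin n)) [DecidableRel G.Adj] :
    Matrix.trace ((G.adjMatrix ℝ) ^ 4) ≥ ∑ i, ((G.degree i : ℝ)) ^ 2 := by
  set B : Matrix (Fin n) (Fin n) ℝ := (G.adjMatrix ℝ) ^ 2 with hB
  have h4 : (G.adjMatrix ℝ) ^ 4 = B * B := by rw [hB, ← pow_add]
  rw [h4, Matrix.trace]
  have hdiag : ∀ i, (B * B).diag i = ∑ j, B i j * B j i := by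
    intro i; rw [Matrix.diag_apply, Matrix.mul_apply]
  rw [Finset.sum_congr rfl fun i _ => hdiag i]
  have hsym : ∀ i j, B j i = B i j := by
    intro i j
    have ht : Matrix.transpose B = B := by
      rw [hB, pow_two, Matrix.transpose_mul, G.transpose_adjMatrix, ← pow_two]
    conv_lhs => rw [← ht, Matrix.transpose_apply]
  have hdeg : ∀ i, B i i = (G.degree i : ℝ) := by
    intro i
    rw [hB, pow_two]
    exact G.adjMatrix_mul_self_apply_self i
  apply Finset.sum_le_sum
  intro i _
  calc (G.degree i : ℝ) ^ 2 = B i i * B i i := by rw [hdeg i, pow_two]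
    _ ≤ ∑ j, B i j * B j i := by
        apply Finset.single_le_sum (f := fun j => B i j * B j i) ?_ (Finset.mem_univ i)
        intro j _
        show 0 ≤ B i j * B j i
        rw [hsym i j]
        exact mul_self_nonneg _

theorem exp_ge_P5 (x : ℝ) :
    1 + x + x^2/2 + x^3/6 + x^4/24 + x^5/120 ≤ Real.exp x := by
  rcases le_or_gt 0 x with hx | hx
  · have h := Real.sum_le_exp_of_nonneg hx 6
    have : ∑ i ∈ Finset.range 6, x ^ i / (i.factorial : ℝ)
        = 1 + x + x^2/2 + x^3/6 + x^4/24 + x^5/120 := by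
      simp [Finset.sum_range_succ, Nat.factorial]
    linarith [this ▸ h]
  · set f : ℝ → ℝ := fun y => Real.exp y * (1 - y + y^2/2 - y^3/6 + y^4/24 - y^5/120) with hf
    have hder : ∀ y : ℝ, HasDerivAt f (-(Real.exp y * y^5/120)) y := by
      intro y
      have h2 : HasDerivAt (fun y : ℝ => 1 - y + y^2/2 - y^3/6 + y^4/24 - y^5/120)
          (0 - 1 + (2:ℕ)*y^(2-1)/2 - (3:ℕ)*y^(3-1)/6 + (4:ℕ)*y^(4-1)/24 - (5:ℕ)*y^(5-1)/120) y := by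
        exact (((((hasDerivAt_const y (1:ℝ)).sub (hasDerivAt_id y)).add
          ((hasDerivAt_pow 2 y).div_const 2)).sub ((hasDerivAt_pow 3 y).div_const 6)).add
          ((hasDerivAt_pow 4 y).div_const 24)).sub ((hasDerivAt_pow 5 y).div_const 120)
      have h3 : HasDerivAt (fun y => Real.exp y * (1 - y + y^2/2 - y^3/6 + y^4/24 - y^5/120))
          (Real.exp y * (1 - y + y^2/2 - y^3/6 + y^4/24 - y^5/120) + Real.exp y *
          (0 - 1 + (2:ℕ)*y^(2-1)/2 - (3:ℕ)*y^(3-1)/6 + (4:ℕ)*y^(4-1)/24 - (5:ℕ)*y^(5-1)/120)) y :=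
        (Real.hasDerivAt_exp y).mul h2
      convert h3 using 1
      push_cast
      ring
    have hanti : AntitoneOn f (Set.Ici (0:ℝ)) := by
      apply antitoneOn_of_deriv_nonpos (convex_Ici 0)
      · exact (Continuous.continuousOn (by fun_prop))
      · intro y hy
        exact (hder y).differentiableAt.differentiableWithinAt
      · intro y hy
        rw [(hder y).deriv]
        simp only [interior_Ici, Set.mem_Ioi] at hy
        have : (0:ℝ) ≤ Real.exp y * y^5/120 := by positivity
        linarith
    have key : f (-x) ≤ f 0 :=
      hanti (Set.mem_Ici.mpr le_rfl) (Set.mem_Ici.mpr (by linarith)) (by linarith)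
    have hf0 : f 0 = 1 := by simp [hf]
    rw [hf0] at key
    have hfx : f (-x) = Real.exp (-x) * (1 + x + x^2/2 + x^3/6 + x^4/24 + x^5/120) := by
      simp only [hf]
      ring_nf
    rw [hfx, Real.exp_neg] at key
    have hx0 : 0 < Real.exp x := Real.exp_pos x
    have hinv : Real.exp x * (Real.exp x)⁻¹ = 1 := mul_inv_cancel₀ (ne_of_gt hx0)
    nlinarith [key, hx0, hinv]

theorem four_reals (a b c d : ℝ) (h1 : a + b + c + d = 0)
    (h2 : a^2 + b^2 + c^2 + d^2 = 8) (h3 : a^3 + b^3 + c^3 + d^3 = 0)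
    (h4 : a^4 + b^4 + c^4 + d^4 = 32) :
    Real.exp a + Real.exp b + Real.exp c + Real.exp d = Real.exp 2 + Real.exp (-2) + 2 := by
  have he2 : a*b + a*c + a*d + b*c + b*d + c*d = -4 := by nlinarith [sq_nonneg (a+b+c+d)]
  have he3 : a*b*c + a*b*d + a*c*d + b*c*d = 0 := by nlinarith [sq_nonneg (a+b+c+d)]
  have he4 : a*b*c*d = 0 := by nlinarith [sq_nonneg (a+b+c+d)]
  have key : ∀ x : ℝ, x = a ∨ x = b ∨ x = c ∨ x = d → x = 0 ∨ x = 2 ∨ x = -2 := by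
    intro x hx
    have h0 : (x-a)*(x-b)*(x-c)*(x-d) = 0 := by
      rcases hx with rfl | rfl | rfl | rfl <;> ring
    have hroot : x^4 - 4*x^2 = 0 := by
      linear_combination h0 + x^3*h1 - x^2*he2 + x*he3 - he4
    have : x^2 * (x-2) * (x+2) = 0 := by linear_combination hroot
    rcases mul_eq_zero.mp this with h | h
    · rcases mul_eq_zero.mp h with h | h
      · left; exact pow_eq_zero_iff (n := 2) (by norm_num) |>.mp h
      · right; left; linarith
    · right; right; linarith
  have ha := key a (Or.inl rfl)
  have hb := key b (Or.inr (Or.inl rfl))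
  have hc := key c (Or.inr (Or.inr (Or.inl rfl)))
  have hd := key d (Or.inr (Or.inr (Or.inr rfl)))
  rcases ha with rfl | rfl | rfl <;> rcases hb with rfl | rfl | rfl <;>
    rcases hc with rfl | rfl | rfl <;> rcases hd with rfl | rfl | rfl <;>
    first
      | (exfalso; revert h1 h2; norm_num; done)
      | (norm_num [Real.exp_zero]; done)
      | (norm_num [Real.exp_zero]; ring_nf; done)
      | (norm_num [Real.exp_zero]; ring)

/-! ### Classification of small cases by `decide` -/

def fB (p q r s t u : Bool) : Fin 4 → Fin 4 → Bool := fun a b =>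
  !![false, p, q, r; p, false, s, t; q, s, false, u; r, t, u, false] a b

theorem core4 : ∀ p q r s t u : Bool,
    (∃ c : Fin 4 → Fin 2, ∀ a b, fB p q r s t u a b = true → c a ≠ c b) →
    (p.toNat + q.toNat + r.toNat + s.toNat + t.toNat + u.toNat = 4) →
    ∃ e : Fin 4 ≃ Fin 4, ∀ a b, fB p q r s t u a b = true ↔
      (SimpleGraph.cycleGraph 4).Adj (e a) (e b) := by
  decide

def f3 (p q r : Bool) : Fin 3 → Fin 3 → Bool := fun a b =>
  !![false, p, q; p, false, r; q, r, false] a b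

theorem core3 : ∀ p q r : Bool,
    (∃ c : Fin 3 → Fin 2, ∀ a b, f3 p q r a b = true → c a ≠ c b) →
    (p.toNat + q.toNat + r.toNat = 3) → False := by
  decide

theorem count_lemma : ∀ p q r s t u : Bool,
    (∑ v : Fin 4, ∑ w : Fin 4, (fB p q r s t u v w).toNat) = 8 →
    p.toNat + q.toNat + r.toNat + s.toNat + t.toNat + u.toNat = 4 := by decide

theorem count_lemma3 : ∀ p q r : Bool,
    (∑ v : Fin 3, ∑ w : Fin 3, (f3 p q r v w).toNat) = 6 →
    p.toNat + q.toNat + r.toNat = 3 := by decide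

theorem class4 (G : SimpleGraph (Fin 4)) [inst : DecidableRel G.Adj]
    (hbip : G.Colorable 2) (huni : G.edgeFinset.card = 4) :
    Nonempty (G ≃g SimpleGraph.cycleGraph 4) := by
  have hf : ∀ a b, G.Adj a b ↔ fB (decide (G.Adj 0 1)) (decide (G.Adj 0 2)) (decide (G.Adj 0 3))
      (decide (G.Adj 1 2)) (decide (G.Adj 1 3)) (decide (G.Adj 2 3)) a b = true := by
    intro a b
    fin_cases a <;> fin_cases b <;>
      simp [fB] <;> exact G.adj_comm _ _
  obtain ⟨C⟩ := hbip
  have hcol : ∃ c : Fin 4 → Fin 2, ∀ a b, fB (decide (G.Adj 0 1)) (decide (G.Adj 0 2))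
      (decide (G.Adj 0 3)) (decide (G.Adj 1 2)) (decide (G.Adj 1 3)) (decide (G.Adj 2 3))
      a b = true → c a ≠ c b :=
    ⟨fun v => C v, fun a b hab => C.valid ((hf a b).mpr hab)⟩
  have hdegsum : ∑ v, G.degree v = 8 := by
    rw [SimpleGraph.sum_degrees_eq_twice_card_edges, huni]
  have hdeg : ∀ v : Fin 4, G.degree v = ∑ w, if G.Adj v w then 1 else 0 := by
    intro v
    rw [← SimpleGraph.card_neighborFinset_eq_degree, SimpleGraph.neighborFinset_eq_filter,
      Finset.card_filter]
  have hterm : ∀ v w, (if G.Adj v w then 1 else 0) = (fB (decide (G.Adj 0 1)) (decide (G.Adj 0 2))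
      (decide (G.Adj 0 3)) (decide (G.Adj 1 2)) (decide (G.Adj 1 3))
      (decide (G.Adj 2 3)) v w).toNat := by
    intro v w
    rw [if_congr (hf v w) rfl rfl]
    cases h : fB (decide (G.Adj 0 1)) (decide (G.Adj 0 2)) (decide (G.Adj 0 3))
      (decide (G.Adj 1 2)) (decide (G.Adj 1 3)) (decide (G.Adj 2 3)) v w <;> simp
  have hsum : ∑ v : Fin 4, ∑ w : Fin 4, (fB (decide (G.Adj 0 1)) (decide (G.Adj 0 2))
      (decide (G.Adj 0 3)) (decide (G.Adj 1 2)) (decide (G.Adj 1 3))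
      (decide (G.Adj 2 3)) v w).toNat = 8 := by
    rw [← hdegsum]
    refine Finset.sum_congr rfl fun v _ => ?_
    rw [hdeg v]
    exact (Finset.sum_congr rfl fun w _ => hterm v w).symm
  obtain ⟨e, he⟩ := core4 _ _ _ _ _ _ hcol (count_lemma _ _ _ _ _ _ hsum)
  exact ⟨⟨e, fun {a b} => ((hf a b).trans (he a b)).symm⟩⟩

theorem no3 (G : SimpleGraph (Fin 3)) [inst : DecidableRel G.Adj]
    (hbip : G.Colorable 2) (huni : G.edgeFinset.card = 3) : False := by
  have hf : ∀ a b, G.Adj a b ↔ f3 (decide (G.Adj 0 1)) (decide (G.Adj 0 2))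
      (decide (G.Adj 1 2)) a b = true := by
    intro a b
    fin_cases a <;> fin_cases b <;>
      simp [f3] <;> exact G.adj_comm _ _
  obtain ⟨C⟩ := hbip
  have hcol : ∃ c : Fin 3 → Fin 2, ∀ a b, f3 (decide (G.Adj 0 1)) (decide (G.Adj 0 2))
      (decide (G.Adj 1 2)) a b = true → c a ≠ c b :=
    ⟨fun v => C v, fun a b hab => C.valid ((hf a b).mpr hab)⟩
  have hdegsum : ∑ v, G.degree v = 6 := by
    rw [SimpleGraph.sum_degrees_eq_twice_card_edges, huni]
  have hdeg : ∀ v : Fin 3, G.degree v = ∑ w, if G.Adj v w then 1 else 0 := by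
    intro v
    rw [← SimpleGraph.card_neighborFinset_eq_degree, SimpleGraph.neighborFinset_eq_filter,
      Finset.card_filter]
  have hterm : ∀ v w, (if G.Adj v w then 1 else 0) = (f3 (decide (G.Adj 0 1))
      (decide (G.Adj 0 2)) (decide (G.Adj 1 2)) v w).toNat := by
    intro v w
    rw [if_congr (hf v w) rfl rfl]
    cases h : f3 (decide (G.Adj 0 1)) (decide (G.Adj 0 2)) (decide (G.Adj 1 2)) v w <;> simp
  have hsum : ∑ v : Fin 3, ∑ w : Fin 3, (f3 (decide (G.Adj 0 1)) (decide (G.Adj 0 2))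
      (decide (G.Adj 1 2)) v w).toNat = 6 := by
    rw [← hdegsum]
    refine Finset.sum_congr rfl fun v _ => ?_
    rw [hdeg v]
    exact (Finset.sum_congr rfl fun w _ => hterm v w).symm
  exact core3 _ _ _ hcol (count_lemma3 _ _ _ hsum)

/-! ### The cycle `C₄` -/

theorem cyc4_adj : (SimpleGraph.cycleGraph 4).adjMatrix ℝ =
    !![0,1,0,1; 1,0,1,0; 0,1,0,1; 1,0,1,0] := by
  ext i j
  fin_cases i <;> fin_cases j <;>
    simp [SimpleGraph.adjMatrix_apply, SimpleGraph.cycleGraph_adj] <;> decide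

theorem cyc4_trace4 : Matrix.trace (((SimpleGraph.cycleGraph 4).adjMatrix ℝ) ^ 4) = 32 := by
  have h2 : ((SimpleGraph.cycleGraph 4).adjMatrix ℝ) ^ 2
      = !![2,0,2,0; 0,2,0,2; 2,0,2,0; 0,2,0,2] := by
    rw [pow_two, cyc4_adj]
    ext i j
    fin_cases i <;> fin_cases j <;>
      simp [Matrix.mul_apply, Fin.sum_univ_four] <;> norm_num
  have h4 : ((SimpleGraph.cycleGraph 4).adjMatrix ℝ) ^ 4
      = ((SimpleGraph.cycleGraph 4).adjMatrix ℝ) ^ 2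
        * ((SimpleGraph.cycleGraph 4).adjMatrix ℝ) ^ 2 := by
    rw [← pow_add]
  rw [h4, h2, Matrix.trace]
  simp [Matrix.diag_apply, Matrix.mul_apply, Fin.sum_univ_four]
  norm_num

theorem trace_pow_submatrix {N : Type*} [Fintype N] [DecidableEq N]
    (B : Matrix N N ℝ) (e : N ≃ N) (k : ℕ) :
    Matrix.trace ((B.submatrix e e) ^ k) = Matrix.trace (B ^ k) := by
  have hpow : (B.submatrix e e) ^ k = (B ^ k).submatrix e e := by
    induction k with
    | zero => simp
    | succ p ih => rw [pow_succ, ih, pow_succ, Matrix.submatrix_mul_equiv]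
  rw [hpow, Matrix.trace, Matrix.trace]
  exact Fintype.sum_equiv e _ _ (fun i => rfl)

theorem EE_of_iso (G : SimpleGraph (Fin 4)) [DecidableRel G.Adj]
    (hbip : G.Colorable 2) (huni : G.edgeFinset.card = 4)
    (e : G ≃g SimpleGraph.cycleGraph 4) :
    EE G = Real.exp 2 + Real.exp (-2) + 2 := by
  have hsub : G.adjMatrix ℝ = ((SimpleGraph.cycleGraph 4).adjMatrix ℝ).submatrix e.toEquiv e.toEquiv := by
    ext i j
    rw [Matrix.submatrix_apply, SimpleGraph.adjMatrix_apply, SimpleGraph.adjMatrix_apply]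
    exact if_congr (e.map_adj_iff).symm rfl rfl
  have hp1 : ∑ i, (eig G i) ^ 1 = 0 := by
    rw [← trace_pow_eq, pow_one, SimpleGraph.trace_adjMatrix]
  have hp2 : ∑ i, (eig G i) ^ 2 = 8 := by
    rw [← trace_pow_eq, trace_sq, huni]; norm_num
  have hp3 : ∑ i, (eig G i) ^ 3 = 0 := by
    rw [← trace_pow_eq]; exact trace_odd_pow G hbip 3 ⟨1, by ring⟩
  have hp4 : ∑ i, (eig G i) ^ 4 = 32 := by
    rw [← trace_pow_eq, hsub, trace_pow_submatrix, cyc4_trace4]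
  rw [EE]
  rw [Fin.sum_univ_four]
  rw [Fin.sum_univ_four] at hp1 hp2 hp3 hp4
  simp only [pow_one] at hp1
  exact four_reals _ _ _ _ hp1 hp2 hp3 hp4

theorem stmt14 {n : ℕ} (G : SimpleGraph (Fin n)) [DecidableRel G.Adj]
    (hG : G.Connected) (hbip : G.Colorable 2) (huni : G.edgeFinset.card = n) :
    EE G ≥ 2 * Real.cosh 2 + ((n : ℝ) - 2) ∧
    (EE G = 2 * Real.cosh 2 + ((n : ℝ) - 2) ↔
      Nonempty (G ≃g SimpleGraph.cycleGraph 4)) := by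
  -- n ≥ 1
  have hn0 : 0 < n := by
    have ⟨v⟩ := hG.nonempty
    exact v.pos
  -- degree sum
  have hdegsum : ∑ v, G.degree v = 2 * n := by
    rw [SimpleGraph.sum_degrees_eq_twice_card_edges, huni]
  -- n ≥ 3
  have hdlt : ∀ v, G.degree v < n := fun v => by
    simpa using G.degree_lt_card_verts v
  have h2n : 2 * n ≤ n * (n - 1) := by
    rw [← hdegsum]
    calc ∑ v, G.degree v ≤ ∑ _v : Fin n, (n - 1) :=
          Finset.sum_le_sum fun v _ => by have := hdlt v; omega
      _ = n * (n - 1) := by simp [Finset.sum_const, mul_comm]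
  have hn3 : 3 ≤ n := by
    by_contra h
    push_neg at h
    interval_cases n <;> omega
  -- n ≠ 3
  have hn4 : 4 ≤ n := by
    rcases Nat.lt_or_ge n 4 with h | h
    · have h3 : n = 3 := by omega
      subst h3
      exact absurd (no3 G hbip huni) not_false
    · exact h
  -- power sums
  have hp1 : ∑ i, (eig G i) ^ 1 = 0 := by
    rw [← trace_pow_eq, pow_one, SimpleGraph.trace_adjMatrix]
  have hp2 : ∑ i, (eig G i) ^ 2 = 2 * n := by
    rw [← trace_pow_eq, trace_sq, huni]
  have hp3 : ∑ i, (eig G i) ^ 3 = 0 := by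
    rw [← trace_pow_eq]; exact trace_odd_pow G hbip 3 ⟨1, by ring⟩
  have hp5 : ∑ i, (eig G i) ^ 5 = 0 := by
    rw [← trace_pow_eq]; exact trace_odd_pow G hbip 5 ⟨2, by ring⟩
  have hncast : (0:ℝ) < (n:ℝ) := by exact_mod_cast hn0
  have hp4 : ∑ i, (eig G i) ^ 4 ≥ 4 * n := by
    rw [← trace_pow_eq]
    refine le_trans ?_ (trace_pow4_ge G)
    have hdegR : ∑ i, (G.degree i : ℝ) = 2 * n := by
      rw [← Nat.cast_sum, hdegsum]; push_cast; ring
    have hcs := sq_sum_le_card_mul_sum_sq (s := (Finset.univ : Finset (Fin n)))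
      (f := fun i => (G.degree i : ℝ))
    rw [hdegR, Finset.card_univ, Fintype.card_fin] at hcs
    nlinarith [hcs, hncast]
  -- lower bound for EE
  have hEE : EE G ≥ 2 * (n:ℝ) + (n:ℝ)/6 := by
    have h1 : EE G ≥ ∑ i, (1 + (eig G i) + (eig G i)^2/2 + (eig G i)^3/6
        + (eig G i)^4/24 + (eig G i)^5/120) :=
      Finset.sum_le_sum fun i _ => exp_ge_P5 (eig G i)
    have h2 : ∑ i, (1 + (eig G i) + (eig G i)^2/2 + (eig G i)^3/6
        + (eig G i)^4/24 + (eig G i)^5/120)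
        = (n:ℝ) + (∑ i, (eig G i)^1) + (∑ i, (eig G i)^2)/2 + (∑ i, (eig G i)^3)/6
          + (∑ i, (eig G i)^4)/24 + (∑ i, (eig G i)^5)/120 := by
      rw [Finset.sum_add_distrib, Finset.sum_add_distrib, Finset.sum_add_distrib,
        Finset.sum_add_distrib, Finset.sum_add_distrib]
      rw [Finset.sum_const, Finset.card_univ, Fintype.card_fin]
      rw [← Finset.sum_div, ← Finset.sum_div, ← Finset.sum_div, ← Finset.sum_div]
      simp [pow_one]
    rw [h2, hp1, hp2, hp3, hp5] at h1
    have : (n:ℝ) + 0 + (2*n)/2 + 0/6 + (∑ i, (eig G i)^4)/24 + 0/120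
        ≥ 2*(n:ℝ) + (n:ℝ)/6 := by
      have := hp4
      nlinarith [hp4]
    linarith
  -- numeric bounds for exp 2
  have hexp2 : Real.exp 2 = Real.exp 1 * Real.exp 1 := by
    rw [← Real.exp_add]; norm_num
  have hub : Real.exp 2 < 7.3890561 := by
    have h := Real.exp_one_lt_d9
    rw [hexp2]
    calc Real.exp 1 * Real.exp 1 < 2.7182818286 * 2.7182818286 :=
          mul_lt_mul'' h h (le_of_lt (Real.exp_pos 1)) (le_of_lt (Real.exp_pos 1))
      _ ≤ 7.3890561 := by norm_num
  have hlb : (7.389056 : ℝ) < Real.exp 2 := by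
    have h := Real.exp_one_gt_d9
    rw [hexp2]
    calc (7.389056 : ℝ) ≤ 2.7182818283 * 2.7182818283 := by norm_num
      _ < Real.exp 1 * Real.exp 1 := mul_lt_mul'' h h (by norm_num) (by norm_num)
  have hprod : Real.exp (-2) * Real.exp 2 = 1 := by
    rw [← Real.exp_add]; norm_num
  have hneg : Real.exp (-2) < 0.14 := by nlinarith [Real.exp_pos 2]
  have hcosh : 2 * Real.cosh 2 = Real.exp 2 + Real.exp (-2) := by
    rw [Real.cosh_eq]; ring
  rcases eq_or_lt_of_le hn4 with h4 | h5
  · -- n = 4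
    have hn : n = 4 := h4.symm
    subst hn
    obtain ⟨e⟩ := class4 G hbip huni
    have hval : EE G = Real.exp 2 + Real.exp (-2) + 2 := EE_of_iso G hbip huni e
    constructor
    · rw [hval, hcosh]; norm_num
    · constructor
      · intro _; exact ⟨e⟩
      · intro _; rw [hval, hcosh]; norm_num
  · -- n ≥ 5
    have hn5 : (5:ℝ) ≤ (n:ℝ) := by exact_mod_cast h5
    have hstrict : EE G > 2 * Real.cosh 2 + ((n:ℝ) - 2) := by
      rw [hcosh]
      nlinarith [hEE, hn5, hub, hneg]
    refine ⟨le_of_lt hstrict, ?_, ?_⟩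
    · intro heq
      exact absurd heq (ne_of_gt hstrict)
    · intro ⟨e⟩
      exfalso
      have hcard : n = 4 := by
        have := Fintype.card_congr e.toEquiv
        simpa using this
      omega

end EstradaIndexPaper
end
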